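/- Let n ∈ ℕ be a time with ℓ_n^- = ℓ_n^+ =: h. Then n = 𝒜(ℓ~_n) + h, and writing n = N(k) one has k = 𝒜(ℓ~_n)/2 + h. -/

import Mathlib

open MeasureTheory Filter

/-- Initial local time: edge `i` denotes the half-integer edge `i + 1/2`
joining `i` and `i+1`; `aInit i = a(i + 1/2)`, which is `0` if `|i+1/2| - 1/2`
is even and `-1` if it is odd. -/
def aInit (i : ℤ) : ℤ := if Even (if 0 ≤ i then i else -i - 1) then 0 else -1

/-- State of the self-repelling walk: current position, edge local times
(`loc i` is the local time of the edge joining `i` and `i+1`, i.e. of the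
half-integer edge `i + 1/2`), and the number of coins used so far. -/
structure SRWState where
  pos : ℤ
  loc : ℤ → ℤ
  coins : ℕ

/-- One step of the self-repelling walk driven by the coin sequence `ε`. -/
def srwStep (ε : ℕ → ℤ) (s : SRWState) : SRWState :=
  let lm := s.loc (s.pos - 1)   -- ℓ_n⁻ = ℓ_n(X_n - 1/2)
  let lp := s.loc s.pos         -- ℓ_n⁺ = ℓ_n(X_n + 1/2)
  let next : ℤ := if lp < lm then s.pos + 1
    else if lm < lp then s.pos - 1
    else s.pos + ε s.coins
  { pos := next
    loc := fun i => if i = min s.pos next then s.loc i + 1 else s.loc i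
    coins := if lm = lp then s.coins + 1 else s.coins }

/-- The self-repelling walk: state after `n` steps. -/
def srw (ε : ℕ → ℤ) : ℕ → SRWState
  | 0 => ⟨0, aInit, 0⟩
  | n + 1 => srwStep ε (srw ε n)

/-- Position `X_n` of the self-repelling walk. -/
def Xwalk (ε : ℕ → ℤ) (n : ℕ) : ℤ := (srw ε n).pos

/-- Edge local time `ℓ_n(i + 1/2)`. -/
def ellEdge (ε : ℕ → ℤ) (n : ℕ) (i : ℤ) : ℤ := (srw ε n).loc i

/-- `ℓ_n⁻ = ℓ_n(X_n - 1/2)`. -/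
def ellMinus (ε : ℕ → ℤ) (n : ℕ) : ℤ := ellEdge ε n (Xwalk ε n - 1)

/-- `ℓ_n⁺ = ℓ_n(X_n + 1/2)`. -/
def ellPlus (ε : ℕ → ℤ) (n : ℕ) : ℤ := ellEdge ε n (Xwalk ε n)

/-- `n` is an equality time: `ℓ_n⁻ = ℓ_n⁺`. -/
def IsEqTime (ε : ℕ → ℤ) (n : ℕ) : Prop := ellMinus ε n = ellPlus ε n

/-- `N(k)`: the `(k+1)`-st smallest equality time. -/
noncomputable def timeN (ε : ℕ → ℤ) (k : ℕ) : ℕ := Nat.nth (IsEqTime ε) k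

/-- `H_n = (ℓ_n⁻ + ℓ_n⁺)/2`. -/
def Hheight (ε : ℕ → ℤ) (n : ℕ) : ℤ := (ellMinus ε n + ellPlus ε n) / 2

/-- `ã(x)`: `0` for even `x`, `-1` for odd `x`. -/
def aTilde (x : ℤ) : ℤ := if Even x then 0 else -1

/-- Modified local time `ℓ~_n(x)`: equals `ℓ_n(x - 1/2)` for `x ≤ X_n` and
`ℓ_n(x + 1/2)` for `x > X_n`. -/
def modLoc (ε : ℕ → ℤ) (n : ℕ) (x : ℤ) : ℤ :=
  if x ≤ Xwalk ε n then ellEdge ε n (x - 1) else ellEdge ε n x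

/-- Area `𝒜(f) = Σ_x (f(x) - ã(x))` between `f` and `ã`. -/
noncomputable def areaA (f : ℤ → ℤ) : ℤ := ∑ᶠ x : ℤ, (f x - aTilde x)

/-- `m₋(f) = 1 + max {x ≤ 0 : f x = -1}`. -/
noncomputable def mMinus (f : ℤ → ℤ) : ℤ := 1 + sSup {x : ℤ | x ≤ 0 ∧ f x = -1}

/-- `m₊(f) = -1 + min {x ≥ 0 : f x = -1}`. -/
noncomputable def mPlus (f : ℤ → ℤ) : ℤ := -1 + sInf {x : ℤ | 0 ≤ x ∧ f x = -1}

/-- `O(f)`: the number of zeros of `f` strictly between `m₋(f)` and `m₊(f)`. -/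
noncomputable def nZeros (f : ℤ → ℤ) : ℕ :=
  {x : ℤ | mMinus f < x ∧ x < mPlus f ∧ f x = 0}.ncard

/-- `o₊ = max {x < m₊(f) : f x = 0}`. -/
noncomputable def oPlus (f : ℤ → ℤ) : ℤ := sSup {x : ℤ | x < mPlus f ∧ f x = 0}

/-- `o₋ = min {x > m₋(f) : f x = 0}`. -/
noncomputable def oMinus (f : ℤ → ℤ) : ℤ := sInf {x : ℤ | mMinus f < x ∧ f x = 0}

open Classical in
/-- The admissible interval `I(f)`. -/
noncomputable def interI (f : ℤ → ℤ) : Set ℤ :=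
  if f = aTilde then {0}
  else if nZeros f = 0 then Set.Icc (mMinus f) (mPlus f)
  else if 0 < oPlus f then Set.Ioc (oPlus f) (mPlus f)
  else Set.Ico (mMinus f) (oMinus f)

/-- Coins as `±1`-valued integers from booleans. -/
def coin (ω : ℕ → Bool) (j : ℕ) : ℤ := if ω j then 1 else -1

section Aux

variable (ε : ℕ → ℤ)

lemma aInit_eq (i : ℤ) : aInit i =
    if 0 ≤ i then (if i % 2 = 0 then 0 else -1) else (if i % 2 = 0 then -1 else 0) := by
  unfold aInit
  rcases le_or_gt 0 i with h | h
  · rw [if_pos h, if_pos h]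
    by_cases h2 : i % 2 = 0
    · rw [if_pos (Int.even_iff.2 h2), if_pos h2]
    · rw [if_neg (fun he => h2 (Int.even_iff.1 he)), if_neg h2]
  · rw [if_neg (not_le.2 h), if_neg (not_le.2 h)]
    by_cases h2 : i % 2 = 0
    · rw [if_neg, if_pos h2]
      intro he; have := Int.even_iff.1 he; omega
    · rw [if_pos, if_neg h2]
      rw [Int.even_iff]; omega

lemma aTilde_eq (x : ℤ) : aTilde x = if x % 2 = 0 then 0 else -1 := by
  unfold aTilde
  by_cases h2 : x % 2 = 0
  · rw [if_pos (Int.even_iff.2 h2), if_pos h2]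
  · rw [if_neg (fun he => h2 (Int.even_iff.1 he)), if_neg h2]

lemma loc_succ (n : ℕ) (i : ℤ) :
    (srw ε (n+1)).loc i =
      if i = min (srw ε n).pos (srw ε (n+1)).pos then (srw ε n).loc i + 1
      else (srw ε n).loc i := rfl

lemma coins_succ (n : ℕ) :
    (srw ε (n+1)).coins =
      if (srw ε n).loc ((srw ε n).pos - 1) = (srw ε n).loc (srw ε n).pos
      then (srw ε n).coins + 1 else (srw ε n).coins := rfl

lemma pos_succ (n : ℕ) :
    (srw ε (n+1)).pos =
      if (srw ε n).loc (srw ε n).pos < (srw ε n).loc ((srw ε n).pos - 1) then (srw ε n).pos + 1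
      else if (srw ε n).loc ((srw ε n).pos - 1) < (srw ε n).loc (srw ε n).pos then (srw ε n).pos - 1
      else (srw ε n).pos + ε (srw ε n).coins := rfl

lemma pos_succ_cases (hε : ∀ j, ε j = 1 ∨ ε j = -1) (n : ℕ) :
    (srw ε (n+1)).pos = (srw ε n).pos + 1 ∨ (srw ε (n+1)).pos = (srw ε n).pos - 1 := by
  rw [pos_succ]
  split_ifs with h1 h2
  · exact Or.inl rfl
  · exact Or.inr rfl
  · rcases hε (srw ε n).coins with h | h <;> rw [h]
    · exact Or.inl rfl
    · exact Or.inr rfl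

lemma pos_bound (hε : ∀ j, ε j = 1 ∨ ε j = -1) (n : ℕ) :
    -(n : ℤ) ≤ (srw ε n).pos ∧ (srw ε n).pos ≤ n := by
  induction n with
  | zero => simp [srw]
  | succ n ih =>
    rcases pos_succ_cases ε hε n with h | h <;> rw [h] <;> push_cast <;> omega

lemma loc_outside (hε : ∀ j, ε j = 1 ∨ ε j = -1) (n : ℕ) :
    ∀ i : ℤ, (i < -(n : ℤ) ∨ (n : ℤ) ≤ i) → (srw ε n).loc i = aInit i := by
  induction n with
  | zero => intro i _; rfl
  | succ n ih =>
    intro i hi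
    have hb := pos_bound ε hε n
    have hb2 := pos_bound ε hε (n+1)
    have hmin : -(n : ℤ) - 1 ≤ min (srw ε n).pos (srw ε (n+1)).pos ∧
        min (srw ε n).pos (srw ε (n+1)).pos ≤ n := by
      constructor
      · apply le_min
        · omega
        · push_cast at hb2 ⊢; omega
      · exact le_trans (min_le_left _ _) hb.2
    rw [loc_succ]
    rw [if_neg (by push_cast at hi ⊢; omega)]
    apply ih
    push_cast at hi ⊢; omega

lemma loc_ge (hε : ∀ j, ε j = 1 ∨ ε j = -1) (n : ℕ) (i : ℤ) :
    -1 ≤ (srw ε n).loc i := by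
  induction n with
  | zero =>
    show -1 ≤ aInit i
    rw [aInit_eq]; split_ifs <;> omega
  | succ n ih =>
    rw [loc_succ]; split_ifs <;> omega

end Aux

lemma invariant (ε : ℕ → ℤ) (hε : ∀ j, ε j = 1 ∨ ε j = -1) (n : ℕ) :
    (∀ i : ℤ, i ≤ (srw ε n).pos - 2 →
      (srw ε n).loc (i+1) - (srw ε n).loc i = 1 ∨ (srw ε n).loc (i+1) - (srw ε n).loc i = -1) ∧
    (∀ i : ℤ, (srw ε n).pos ≤ i →
      (srw ε n).loc (i+1) - (srw ε n).loc i = 1 ∨ (srw ε n).loc (i+1) - (srw ε n).loc i = -1) ∧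
    ((srw ε n).loc ((srw ε n).pos - 1) - (srw ε n).loc (srw ε n).pos = 0 ∨
      (srw ε n).loc ((srw ε n).pos - 1) - (srw ε n).loc (srw ε n).pos = 2 ∨
      (srw ε n).loc ((srw ε n).pos - 1) - (srw ε n).loc (srw ε n).pos = -2) ∧
    2 * ((srw ε n).coins : ℤ) =
      (n : ℤ) + max ((srw ε n).loc ((srw ε n).pos - 1)) ((srw ε n).loc (srw ε n).pos) := by
  induction n with
  | zero =>
    have hp : (srw ε 0).pos = 0 := rfl
    have hl : ∀ i, (srw ε 0).loc i = aInit i := fun _ => rfl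
    have hc : (srw ε 0).coins = 0 := rfl
    refine ⟨?_, ?_, ?_, ?_⟩
    · intro i hi; rw [hp] at hi; rw [hl, hl, aInit_eq, aInit_eq]; split_ifs <;> omega
    · intro i hi; rw [hp] at hi; rw [hl, hl, aInit_eq, aInit_eq]; split_ifs <;> omega
    · rw [hp, hl, hl, aInit_eq, aInit_eq]; norm_num
    · rw [hp, hc, hl, hl, aInit_eq, aInit_eq]; norm_num
  | succ n ih =>
    obtain ⟨hA, hB, hC, hD⟩ := ih
    rcases pos_succ_cases ε hε n with hpos | hpos
    · -- moved right, bumped edge (srw ε n).pos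
      have hRC : (srw ε n).loc ((srw ε n).pos - 1) - (srw ε n).loc (srw ε n).pos = 0 ∨
          (srw ε n).loc ((srw ε n).pos - 1) - (srw ε n).loc (srw ε n).pos = 2 := by
        rcases hC with h | h | h
        · exact Or.inl h
        · exact Or.inr h
        · exfalso
          rw [pos_succ, if_neg (by omega), if_pos (by omega)] at hpos
          omega
      have hloc' : ∀ i, (srw ε (n+1)).loc i =
          if i = (srw ε n).pos then (srw ε n).loc i + 1 else (srw ε n).loc i := by
        intro i; rw [loc_succ, hpos, min_eq_left (by omega)]
      have hcoins' : 2 * ((srw ε (n+1)).coins : ℤ) =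
          2 * ((srw ε n).coins : ℤ) + (if (srw ε n).loc ((srw ε n).pos - 1) = (srw ε n).loc (srw ε n).pos then 2 else 0) := by
        rw [coins_succ]; split_ifs <;> push_cast <;> omega
      have hB1 := hB (srw ε n).pos le_rfl
      have hD' : 2 * ((srw ε n).coins : ℤ) = (n : ℤ) + (srw ε n).loc ((srw ε n).pos - 1) := by
        rwa [max_eq_left (by omega)] at hD
      refine ⟨?_, ?_, ?_, ?_⟩
      · intro i hi; rw [hpos] at hi
        rw [hloc', hloc']
        by_cases h1 : i + 1 = (srw ε n).pos
        · obtain rfl : i = (srw ε n).pos - 1 := by omega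
          have e1 : (srw ε n).pos - 1 + 1 = (srw ε n).pos := by omega
          rw [e1, if_pos rfl, if_neg (by omega)]
          omega
        · rw [if_neg h1, if_neg (by omega)]
          exact hA i (by omega)
      · intro i hi; rw [hpos] at hi
        rw [hloc', hloc', if_neg (by omega), if_neg (by omega)]
        exact hB i (by omega)
      · rw [hpos]
        have e1 : (srw ε n).pos + 1 - 1 = (srw ε n).pos := by omega
        rw [e1, hloc', hloc', if_pos rfl, if_neg (by omega)]
        omega
      · rw [hpos]
        have e1 : (srw ε n).pos + 1 - 1 = (srw ε n).pos := by omega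
        rw [e1, hloc', hloc', if_pos rfl, if_neg (by omega), hcoins']
        rw [max_eq_left (by omega)]
        push_cast
        rcases hRC with h | h
        · rw [if_pos (by omega)]; omega
        · rw [if_neg (by omega)]; omega
    · -- moved left, bumped edge (srw ε n).pos - 1
      have hRC : (srw ε n).loc ((srw ε n).pos - 1) - (srw ε n).loc (srw ε n).pos = 0 ∨
          (srw ε n).loc ((srw ε n).pos - 1) - (srw ε n).loc (srw ε n).pos = -2 := by
        rcases hC with h | h | h
        · exact Or.inl h
        · exfalso
          rw [pos_succ, if_pos (by omega)] at hpos
          omega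
        · exact Or.inr h
      have hloc' : ∀ i, (srw ε (n+1)).loc i =
          if i = (srw ε n).pos - 1 then (srw ε n).loc i + 1 else (srw ε n).loc i := by
        intro i; rw [loc_succ, hpos, min_eq_right (by omega)]
      have hcoins' : 2 * ((srw ε (n+1)).coins : ℤ) =
          2 * ((srw ε n).coins : ℤ) + (if (srw ε n).loc ((srw ε n).pos - 1) = (srw ε n).loc (srw ε n).pos then 2 else 0) := by
        rw [coins_succ]; split_ifs <;> push_cast <;> omega
      have hA1 := hA ((srw ε n).pos - 2) (by omega)
      have e2 : (srw ε n).pos - 2 + 1 = (srw ε n).pos - 1 := by omega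
      rw [e2] at hA1
      have hD' : 2 * ((srw ε n).coins : ℤ) = (n : ℤ) + (srw ε n).loc (srw ε n).pos := by
        rwa [max_eq_right (by omega)] at hD
      refine ⟨?_, ?_, ?_, ?_⟩
      · intro i hi; rw [hpos] at hi
        rw [hloc', hloc', if_neg (by omega), if_neg (by omega)]
        exact hA i (by omega)
      · intro i hi; rw [hpos] at hi
        rw [hloc', hloc']
        by_cases h1 : i = (srw ε n).pos - 1
        · subst h1
          have e1 : (srw ε n).pos - 1 + 1 = (srw ε n).pos := by omega
          rw [e1, if_neg (by omega), if_pos rfl]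
          omega
        · rw [if_neg (by omega), if_neg h1]
          exact hB i (by omega)
      · rw [hpos]
        rw [show (srw ε n).pos - 1 - 1 = (srw ε n).pos - 2 from by omega]
        rw [hloc', hloc', if_neg (by omega), if_pos rfl]
        omega
      · rw [hpos]
        rw [show (srw ε n).pos - 1 - 1 = (srw ε n).pos - 2 from by omega]
        rw [hloc', hloc', if_neg (by omega), if_pos rfl, hcoins']
        rw [max_eq_right (by omega)]
        push_cast
        rcases hRC with h | h
        · rw [if_pos (by omega)]; omega
        · rw [if_neg (by omega)]; omega

lemma modLoc_outside (ε : ℕ → ℤ) (hε : ∀ j, ε j = 1 ∨ ε j = -1) (n : ℕ) (x : ℤ)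
    (hx : x < -(n : ℤ) ∨ (n : ℤ) < x) : modLoc ε n x = aTilde x := by
  have hb := pos_bound ε hε n
  unfold modLoc Xwalk ellEdge
  rcases hx with hx | hx
  · rw [if_pos (by omega), loc_outside ε hε n (x-1) (Or.inl (by omega)),
      aInit_eq, aTilde_eq]
    split_ifs <;> omega
  · rw [if_neg (by omega), loc_outside ε hε n x (Or.inr (by omega)),
      aInit_eq, aTilde_eq]
    split_ifs <;> omega

lemma modLoc_support (ε : ℕ → ℤ) (hε : ∀ j, ε j = 1 ∨ ε j = -1) (n : ℕ) :
    (Function.support fun x => modLoc ε n x - aTilde x).Finite := by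
  apply Set.Finite.subset (Set.finite_Icc (-(n : ℤ)) n)
  intro x hx
  simp only [Set.mem_Icc]
  by_contra hmem
  have hx2 : x < -(n : ℤ) ∨ (n : ℤ) < x := by omega
  rw [Function.mem_support, modLoc_outside ε hε n x hx2, sub_self] at hx
  exact hx rfl

lemma areaA_update (f g : ℤ → ℤ) (hf : (Function.support fun x => f x - aTilde x).Finite)
    (x₀ v : ℤ) (hg : ∀ x, g x = if x = x₀ then v else f x) :
    areaA g = areaA f + (v - f x₀) := by
  unfold areaA
  have h1 : (fun x => g x - aTilde x) =
      fun x => (f x - aTilde x) + (if x = x₀ then v - f x₀ else 0) := by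
    funext x
    rw [hg]
    split_ifs with h
    · subst h; ring
    · ring
  have hs : (Function.support fun x => if x = x₀ then v - f x₀ else 0).Finite := by
    apply Set.Finite.subset (Set.finite_singleton x₀)
    intro x hx
    simp only [Set.mem_singleton_iff]
    by_contra h
    rw [Function.mem_support, if_neg h] at hx
    exact hx rfl
  rw [h1, finsum_add_distrib hf hs,
    finsum_eq_single _ x₀ (fun x hx => if_neg hx), if_pos rfl]

lemma areaA_modLoc (ε : ℕ → ℤ) (hε : ∀ j, ε j = 1 ∨ ε j = -1) (n : ℕ) :
    areaA (modLoc ε n) = (n : ℤ) - (srw ε n).loc (srw ε n).pos := by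
  induction n with
  | zero =>
    have h0 : modLoc ε 0 = aTilde := by
      funext x
      show (if x ≤ (srw ε 0).pos then aInit (x-1) else aInit x) = aTilde x
      have hp0 : (srw ε 0).pos = 0 := rfl
      rw [hp0, aInit_eq, aInit_eq, aTilde_eq]
      split_ifs <;> omega
    have h1 : (srw ε 0).loc (srw ε 0).pos = 0 := by
      show aInit 0 = 0
      rw [aInit_eq]; norm_num
    rw [h0, h1]
    unfold areaA
    simp
  | succ n ih =>
    rcases pos_succ_cases ε hε n with hpos | hpos
    · have hloc' : ∀ i, (srw ε (n+1)).loc i =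
          if i = (srw ε n).pos then (srw ε n).loc i + 1 else (srw ε n).loc i := by
        intro i; rw [loc_succ, hpos, min_eq_left (by omega)]
      have hmod : ∀ x, modLoc ε (n+1) x =
          if x = (srw ε n).pos + 1 then (srw ε n).loc (srw ε n).pos + 1 else modLoc ε n x := by
        intro x
        unfold modLoc Xwalk ellEdge
        rw [hpos]
        by_cases h1 : x ≤ (srw ε n).pos
        · rw [if_pos (by omega), if_neg (by omega), hloc', if_neg (by omega), if_pos h1]
        · by_cases h2 : x = (srw ε n).pos + 1
          · rw [if_pos (by omega), if_pos h2, hloc']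
            subst h2
            rw [show (srw ε n).pos + 1 - 1 = (srw ε n).pos from by omega, if_pos rfl]
          · rw [if_neg (by omega), if_neg h2, hloc', if_neg (by omega), if_neg (by omega)]
      rw [areaA_update (modLoc ε n) (modLoc ε (n+1)) (modLoc_support ε hε n) _ _ hmod, ih]
      have h2 : modLoc ε n ((srw ε n).pos + 1) = (srw ε n).loc ((srw ε n).pos + 1) := by
        unfold modLoc Xwalk ellEdge
        rw [if_neg (by omega)]
      have h3 : (srw ε (n+1)).loc (srw ε (n+1)).pos = (srw ε n).loc ((srw ε n).pos + 1) := by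
        rw [hpos, hloc', if_neg (by omega)]
      rw [h2, h3]
      push_cast; ring
    · have hloc' : ∀ i, (srw ε (n+1)).loc i =
          if i = (srw ε n).pos - 1 then (srw ε n).loc i + 1 else (srw ε n).loc i := by
        intro i; rw [loc_succ, hpos, min_eq_right (by omega)]
      have hmod : ∀ x, modLoc ε (n+1) x =
          if x = (srw ε n).pos then (srw ε n).loc (srw ε n).pos else modLoc ε n x := by
        intro x
        unfold modLoc Xwalk ellEdge
        rw [hpos]
        by_cases h1 : x ≤ (srw ε n).pos - 1
        · rw [if_pos h1, if_neg (by omega), hloc', if_neg (by omega), if_pos (by omega)]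
        · by_cases h2 : x = (srw ε n).pos
          · rw [if_neg (by omega), if_pos h2, hloc', if_neg (by omega)]
            subst h2; rfl
          · rw [if_neg (by omega), if_neg h2, hloc', if_neg (by omega), if_neg (by omega)]
      rw [areaA_update (modLoc ε n) (modLoc ε (n+1)) (modLoc_support ε hε n) _ _ hmod, ih]
      have h2 : modLoc ε n ((srw ε n).pos) = (srw ε n).loc ((srw ε n).pos - 1) := by
        unfold modLoc Xwalk ellEdge
        rw [if_pos le_rfl]
      have h3 : (srw ε (n+1)).loc (srw ε (n+1)).pos = (srw ε n).loc ((srw ε n).pos - 1) + 1 := by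
        rw [hpos, hloc', if_pos rfl]
      rw [h2, h3]
      push_cast; ring

lemma coins_eq_count (ε : ℕ → ℤ) [DecidablePred (IsEqTime ε)] (m : ℕ) :
    (srw ε m).coins = Nat.count (IsEqTime ε) m := by
  induction m with
  | zero => simp [srw, Nat.count_zero]
  | succ m ihm =>
    rw [coins_succ, Nat.count_succ, ihm]
    by_cases hq : IsEqTime ε m
    · have hq' : (srw ε m).loc ((srw ε m).pos - 1) = (srw ε m).loc (srw ε m).pos := hq
      rw [if_pos hq', if_pos hq]
    · have hq' : ¬ (srw ε m).loc ((srw ε m).pos - 1) = (srw ε m).loc (srw ε m).pos := hq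
      rw [if_neg hq', if_neg hq]
      omega

lemma eqTime_infinite (ε : ℕ → ℤ) (hε : ∀ j, ε j = 1 ∨ ε j = -1) :
    (setOf (IsEqTime ε)).Infinite := by
  classical
  by_contra hfin
  rw [Set.not_infinite] at hfin
  set m : ℕ := 2 * hfin.toFinset.card + 2 with hm
  obtain ⟨-, -, -, hDm⟩ := invariant ε hε m
  have hge : -1 ≤ (srw ε m).loc (srw ε m).pos := loc_ge ε hε m _
  have hmax : -1 ≤ max ((srw ε m).loc ((srw ε m).pos - 1)) ((srw ε m).loc (srw ε m).pos) :=
    le_trans hge (le_max_right _ _)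
  have h1 := coins_eq_count ε m
  have h2 : Nat.count (IsEqTime ε) m ≤ hfin.toFinset.card := Nat.count_le_card hfin m
  rw [← h1] at h2
  omega


/-- if `ℓ_n⁻ = ℓ_n⁺ = h` then `n = 𝒜(ℓ~_n) + h`, and writing
`n = N(k)` one has `k = 𝒜(ℓ~_n)/2 + h`. -/
theorem statement1 (ε : ℕ → ℤ) (hε : ∀ j, ε j = 1 ∨ ε j = -1)
    (n : ℕ) (h : ℤ) (hm : ellMinus ε n = h) (hp : ellPlus ε n = h) :
    (n : ℤ) = areaA (modLoc ε n) + h ∧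
      ∀ k : ℕ, n = timeN ε k → (k : ℤ) = areaA (modLoc ε n) / 2 + h := by
  classical
  obtain ⟨hA, hB, hC, hD⟩ := invariant ε hε n
  have hlm : (srw ε n).loc ((srw ε n).pos - 1) = h := hm
  have hlp : (srw ε n).loc (srw ε n).pos = h := hp
  have hAr := areaA_modLoc ε hε n
  rw [hlp] at hAr
  constructor
  · rw [hAr]; ring
  · intro k hk
    have hinf := eqTime_infinite ε hε
    have hk' : Nat.count (IsEqTime ε) n = k := by
      have hcn := Nat.count_nth_of_infinite hinf k
      unfold timeN at hk
      rwa [← hk] at hcn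
    have hco : (srw ε n).coins = k := by rw [coins_eq_count ε n, hk']
    rw [hlm, hlp, max_self] at hD
    rw [hco] at hD
    rw [hAr]
    omega
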